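/- arXiv:1811.08706 — 3 statements merged into one kernel-verified Lean document; each statement's English description precedes it below -/
import Mathlib

section
/- Let 0 ≤ t < T, a > 0, b ∈ ℝ, r₀ ∈ ℝ, and let μ : [t,T] → ℝ be continuous. Define f : [t,T] → ℝ by f(s) = r₀ e^{−a(s−t)} + a ∫_t^s μ(u) e^{−a(s−u)} du − (b²/(2a²)) (1 − e^{−a(s−t)})². Then f is differentiable on (t,T) and for every s ∈ (t,T) one has μ(s) = f(s) + (1/a) f'(s) + (b²/(2a²)) (1 − e^{−2a(s−t)}). -/
open MeasureTheory intervalIntegral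

/-- Hull–White calibration, deterministic verification: if the forward rate curve `f`
is given by the integral formula in terms of the mean-reversion function `μ`, then `μ`
is recovered from `f` by `μ(s) = f(s) + (1/a) f'(s) + (b²/(2a²))(1 − e^{−2a(s−t)})`. -/
theorem stmt_7 (t T a b r₀ : ℝ) (ht : 0 ≤ t) (htT : t < T) (ha : 0 < a)
    (μ : ℝ → ℝ) (hμ : ContinuousOn μ (Set.Icc t T))
    (f : ℝ → ℝ)
    (hf : ∀ s ∈ Set.Icc t T, f s =
      r₀ * Real.exp (-a * (s - t))
        + a * (∫ u in t..s, μ u * Real.exp (-a * (s - u)))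
        - b ^ 2 / (2 * a ^ 2) * (1 - Real.exp (-a * (s - t))) ^ 2) :
    ∀ s ∈ Set.Ioo t T, ∃ f' : ℝ,
      HasDerivAt f f' s ∧
      μ s = f s + (1 / a) * f' + b ^ 2 / (2 * a ^ 2) * (1 - Real.exp (-2 * a * (s - t))) := by
  intro s hs
  have ha' : a ≠ 0 := ne_of_gt ha
  have hsI : s ∈ Set.Icc t T := Set.Ioo_subset_Icc_self hs
  have hcont : ContinuousOn (fun u => μ u * Real.exp (a * u)) (Set.Icc t T) :=
    hμ.mul ((Real.continuous_exp.comp (continuous_const.mul continuous_id)).continuousOn)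
  have hmem : Set.Icc t T ∈ nhds s := Icc_mem_nhds hs.1 hs.2
  have hcontAt : ContinuousAt (fun u => μ u * Real.exp (a * u)) s := hcont.continuousAt hmem
  have hsub : Set.uIcc t s ⊆ Set.Icc t T := by
    rw [Set.uIcc_of_le hsI.1]
    exact Set.Icc_subset_Icc le_rfl hsI.2
  have hint : IntervalIntegrable (fun u => μ u * Real.exp (a * u)) volume t s :=
    (hcont.mono hsub).intervalIntegrable
  have hF : HasDerivAt (fun x => ∫ u in t..x, μ u * Real.exp (a * u))
      (μ s * Real.exp (a * s)) s :=
    intervalIntegral.integral_hasDerivAt_right hint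
      ((hcont.mono Set.Ioo_subset_Icc_self).stronglyMeasurableAtFilter isOpen_Ioo s hs)
      hcontAt
  set g : ℝ → ℝ := fun x => r₀ * Real.exp (-a * (x - t))
      + a * (Real.exp (-a * x) * ∫ u in t..x, μ u * Real.exp (a * u))
      - b ^ 2 / (2 * a ^ 2) * (1 - Real.exp (-a * (x - t))) ^ 2 with hg
  have heq : ∀ x ∈ Set.Icc t T, f x = g x := by
    intro x hx
    rw [hf x hx, hg]
    have : (∫ u in t..x, μ u * Real.exp (-a * (x - u)))
        = Real.exp (-a * x) * ∫ u in t..x, μ u * Real.exp (a * u) := by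
      rw [← intervalIntegral.integral_const_mul]
      apply intervalIntegral.integral_congr
      intro u _
      show μ u * Real.exp (-a * (x - u)) = Real.exp (-a * x) * (μ u * Real.exp (a * u))
      rw [show Real.exp (-a * x) * (μ u * Real.exp (a * u))
          = μ u * (Real.exp (-a * x) * Real.exp (a * u)) by ring, ← Real.exp_add]
      ring_nf
    rw [this]
  have e1 : HasDerivAt (fun x : ℝ => Real.exp (-a * (x - t)))
      (Real.exp (-a * (s - t)) * (-a)) s := by
    have h0 : HasDerivAt (fun x : ℝ => -a * (x - t)) (-a) s := by
      simpa using ((hasDerivAt_id s).sub_const t).const_mul (-a)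
    simpa [mul_comm] using h0.exp
  have e2 : HasDerivAt (fun x : ℝ => Real.exp (-a * x)) (Real.exp (-a * s) * (-a)) s := by
    have h0 : HasDerivAt (fun x : ℝ => -a * x) (-a) s := by
      simpa using (hasDerivAt_id s).const_mul (-a)
    simpa [mul_comm] using h0.exp
  have hgD := ((e1.const_mul r₀).add ((e2.mul hF).const_mul a)).sub
    ((((hasDerivAt_const s (1:ℝ)).sub e1).pow 2).const_mul (b ^ 2 / (2 * a ^ 2)))
  have hfg : f =ᶠ[nhds s] g := by
    filter_upwards [hmem] with x hx using heq x hx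
  refine ⟨_, hfg.hasDerivAt_iff.mpr hgD, ?_⟩
  rw [heq s hsI]
  simp only [hg, Pi.sub_apply]
  have key1 : Real.exp (-a * s) * (μ s * Real.exp (a * s)) = μ s := by
    rw [show Real.exp (-a * s) * (μ s * Real.exp (a * s))
        = μ s * (Real.exp (-a * s) * Real.exp (a * s)) by ring, ← Real.exp_add]
    simp
  have key2 : Real.exp (-2 * a * (s - t)) = Real.exp (-a * (s - t)) ^ 2 := by
    rw [sq, ← Real.exp_add]; ring_nf
  rw [key2]
  set E : ℝ := Real.exp (-a * (s - t))
  set e : ℝ := Real.exp (-a * s)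
  set I : ℝ := ∫ u in t..s, μ u * Real.exp (a * u)
  rw [show e * (μ s * Real.exp (a * s)) = μ s from key1] at *
  field_simp
  ring
end

section
/- Let 0 ≤ t < T, a > 0, b ∈ ℝ, and let f : [t,T] → ℝ be continuously differentiable. Define μ(s) = f(s) + (1/a) f'(s) + (b²/(2a²)) (1 − e^{−2a(s−t)}) and α(s) = f(s) + (b²/(2a²)) (1 − e^{−a(s−t)})² for s ∈ [t,T]. Then for every s ∈ [t,T], a ∫_t^s e^{−a(s−u)} μ(u) du = α(s) − α(t) e^{−a(s−t)}. -/
open MeasureTheory intervalIntegral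

/-- Deterministic core of the decomposition lemma for the Hull–White short rate: with
`μ` calibrated from the forward curve `f` and `α` the deterministic part of the short
rate, one has `a ∫_t^s e^{−a(s−u)} μ(u) du = α(s) − α(t) e^{−a(s−t)}`. -/
theorem stmt_8 (t T a b : ℝ) (ht : 0 ≤ t) (htT : t < T) (ha : 0 < a)
    (f f' : ℝ → ℝ)
    (hf : ∀ s ∈ Set.Icc t T, HasDerivWithinAt f (f' s) (Set.Icc t T) s)
    (hf' : ContinuousOn f' (Set.Icc t T))
    (μ α : ℝ → ℝ)
    (hμ : ∀ s, μ s = f s + (1 / a) * f' s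
      + b ^ 2 / (2 * a ^ 2) * (1 - Real.exp (-2 * a * (s - t))))
    (hα : ∀ s, α s = f s + b ^ 2 / (2 * a ^ 2) * (1 - Real.exp (-a * (s - t))) ^ 2) :
    ∀ s ∈ Set.Icc t T,
      a * (∫ u in t..s, Real.exp (-a * (s - u)) * μ u)
        = α s - α t * Real.exp (-a * (s - t)) := by
  intro s hs
  obtain ⟨hts, hsT⟩ := hs
  set C := b ^ 2 / (2 * a ^ 2) with hCdef
  have hαfun : α = fun u => f u + C * (1 - Real.exp (-a * (u - t))) ^ 2 := funext hα
  have hμfun : μ = fun u => f u + (1 / a) * f' u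
      + C * (1 - Real.exp (-2 * a * (u - t))) := funext hμ
  have hfc : ContinuousOn f (Set.Icc t T) := fun x hx => (hf x hx).continuousWithinAt
  have hIcc : Set.Icc t s ⊆ Set.Icc t T := Set.Icc_subset_Icc le_rfl hsT
  set g : ℝ → ℝ := fun u => Real.exp (-a * (s - u)) * α u with hg
  have key : ∀ x ∈ Set.Ioo t s,
      HasDerivWithinAt g (a * (Real.exp (-a * (s - x)) * μ x)) (Set.Ioi x) x := by
    intro x hx
    have hxT : x ∈ Set.Icc t T := ⟨hx.1.le, hx.2.le.trans hsT⟩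
    have hmem : Set.Icc t T ∈ nhdsWithin x (Set.Ioi x) :=
      mem_nhdsWithin_of_mem_nhds (Filter.mem_of_superset
        (Ioo_mem_nhds hx.1 (lt_of_lt_of_le hx.2 hsT)) Set.Ioo_subset_Icc_self)
    have hfx : HasDerivWithinAt f (f' x) (Set.Ioi x) x := (hf x hxT).mono_of_mem_nhdsWithin hmem
    have hE : HasDerivAt (fun u => Real.exp (-a * (u - t))) (-a * Real.exp (-a * (x - t))) x := by
      have h1 : HasDerivAt (fun u : ℝ => -a * (u - t)) (-a) x := by
        simpa using ((hasDerivAt_id x).sub_const t).const_mul (-a)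
      simpa [mul_comm] using h1.exp
    have hα' : HasDerivWithinAt α
        (f' x + C * (2 * (1 - Real.exp (-a * (x - t))) * (a * Real.exp (-a * (x - t)))))
        (Set.Ioi x) x := by
      rw [hαfun]
      refine hfx.add (HasDerivAt.hasDerivWithinAt ?_)
      have h2 := ((hasDerivAt_const x (1 : ℝ)).sub hE).pow 2
      have h3 := h2.const_mul C
      refine h3.congr_deriv ?_
      simp only [Pi.sub_apply]
      ring
    have hexp : HasDerivAt (fun u => Real.exp (-a * (s - u))) (a * Real.exp (-a * (s - x))) x := by
      have h1 : HasDerivAt (fun u : ℝ => -a * (s - u)) a x := by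
        simpa using ((hasDerivAt_id x).const_sub s).const_mul (-a)
      simpa [mul_comm] using h1.exp
    have hmul := hexp.hasDerivWithinAt.mul hα'
    refine hmul.congr_deriv ?_
    rw [hμ x, hα x]
    have hE2 : Real.exp (-2 * a * (x - t)) = Real.exp (-a * (x - t)) ^ 2 := by
      rw [sq, ← Real.exp_add]; ring_nf
    rw [hE2]
    field_simp
    ring
  have hαc : ContinuousOn α (Set.Icc t T) := by
    rw [hαfun]
    exact hfc.add (Continuous.continuousOn (by fun_prop))
  have hcont : ContinuousOn g (Set.Icc t s) :=
    (Continuous.continuousOn (by fun_prop)).mul (hαc.mono hIcc)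
  have hμc : ContinuousOn μ (Set.Icc t s) := by
    rw [hμfun]
    exact ((hfc.mono hIcc).add (continuousOn_const.mul (hf'.mono hIcc))).add
      (Continuous.continuousOn (by fun_prop))
  have hint : IntervalIntegrable (fun u => a * (Real.exp (-a * (s - u)) * μ u)) volume t s := by
    apply ContinuousOn.intervalIntegrable
    rw [Set.uIcc_of_le hts]
    exact continuousOn_const.mul ((Continuous.continuousOn (by fun_prop)).mul hμc)
  have hFTC := integral_eq_sub_of_hasDeriv_right_of_le hts hcont key hint
  rw [← intervalIntegral.integral_const_mul] at *
  rw [hFTC]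
  simp only [hg]
  simp [sub_self, mul_comm]
end

section
/- Let h : [0,1] → [0,∞) be a nondecreasing probability density on [0,1] (i.e., ∫_0^1 h(p) dp = 1), let (Ω, 𝓕, P) be a probability space, let X, Y : Ω → ℝ be bounded random variables, and let t ∈ [0,1]. Then ρ_h(law of (t·X + (1−t)·Y)) ≤ t · ρ_h(law of X) + (1−t) · ρ_h(law of Y), where ρ_h(η) = ∫_0^1 V@R_p(η) h(p) dp. (Convexity of spectral risk measures.) -/
open MeasureTheory Set

/-- Value-at-Risk at level `p` of a distribution `η` on ℝ:
`V@R_p(η) = inf { q | η((−∞,q]) ≥ p }`. -/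
noncomputable def VaR (p : ℝ) (η : Measure ℝ) : ℝ :=
  sInf {q : ℝ | p ≤ (η (Set.Iic q)).toReal}

/-- Spectral risk measure with spectrum `h`: `ρ_h(η) = ∫_0^1 V@R_p(η) h(p) dp`. -/
noncomputable def spectralRisk (h : ℝ → ℝ) (η : Measure ℝ) : ℝ :=
  ∫ p in (0 : ℝ)..1, VaR p η * h p

namespace SRM

variable {η : Measure ℝ} {M : ℝ}

lemma M_nonneg [IsProbabilityMeasure η] (hM : η {x | M < |x|} = 0) : 0 ≤ M := by
  by_contra hlt
  push_neg at hlt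
  have : ({x : ℝ | M < |x|} : Set ℝ) = univ := by
    ext x; simp only [mem_setOf_eq, mem_univ, iff_true]
    exact lt_of_lt_of_le hlt (abs_nonneg x)
  rw [this] at hM
  simp at hM

lemma Iic_one [IsProbabilityMeasure η] (hM : η {x | M < |x|} = 0) :
    (η (Set.Iic M)).toReal = 1 := by
  have h0 : η (Set.Ioi M) = 0 := by
    refine measure_mono_null (fun x hx => ?_) hM
    exact lt_of_lt_of_le hx (le_abs_self x)
  have := measure_compl (s := Set.Ioi M) measurableSet_Ioi (measure_ne_top η _)
  rw [compl_Ioi, h0, measure_univ] at this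
  simp [this]

lemma Iic_zero [IsProbabilityMeasure η] (hM : η {x | M < |x|} = 0) {q : ℝ} (hq : q < -M) :
    η (Set.Iic q) = 0 := by
  refine measure_mono_null (fun x hx => ?_) hM
  simp only [mem_Iic] at hx
  simp only [mem_setOf_eq]
  have : x < -M := lt_of_le_of_lt hx hq
  calc M < -x := by linarith
  _ ≤ |x| := neg_le_abs x

lemma mem_S_M [IsProbabilityMeasure η] (hM : η {x | M < |x|} = 0) {p : ℝ} (hp1 : p ≤ 1) :
    M ∈ {q : ℝ | p ≤ (η (Set.Iic q)).toReal} := by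
  simp only [mem_setOf_eq, Iic_one hM]; exact hp1

lemma S_subset [IsProbabilityMeasure η] (hM : η {x | M < |x|} = 0) {p : ℝ} (hp : 0 < p) :
    {q : ℝ | p ≤ (η (Set.Iic q)).toReal} ⊆ Set.Ici (-M) := by
  intro q hq
  simp only [mem_setOf_eq] at hq
  by_contra hlt
  simp only [mem_Ici, not_le] at hlt
  rw [Iic_zero hM hlt] at hq
  simp at hq
  linarith

lemma VaR_le_iff [IsProbabilityMeasure η] (hM : η {x | M < |x|} = 0) {p x : ℝ}
    (hp : 0 < p) (hp1 : p ≤ 1) : VaR p η ≤ x ↔ p ≤ (η (Set.Iic x)).toReal := by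
  constructor
  · intro hle
    have hcdf : ∀ y, (η (Set.Iic y)).toReal = ProbabilityTheory.cdf η y :=
      fun y => (ProbabilityTheory.cdf_eq_real η y).symm
    rw [hcdf]
    have hne : {q : ℝ | p ≤ (η (Set.Iic q)).toReal}.Nonempty := ⟨M, mem_S_M hM hp1⟩
    have key : ∀ y, x < y → p ≤ ProbabilityTheory.cdf η y := by
      intro y hy
      obtain ⟨q, hq, hqy⟩ := exists_lt_of_csInf_lt hne (lt_of_le_of_lt hle hy)
      simp only [mem_setOf_eq] at hq
      calc p ≤ (η (Set.Iic q)).toReal := hq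
        _ = ProbabilityTheory.cdf η q := hcdf q
        _ ≤ ProbabilityTheory.cdf η y := (ProbabilityTheory.cdf η).mono hqy.le
    have hrc : ContinuousWithinAt (ProbabilityTheory.cdf η) (Set.Ici x) x :=
      (ProbabilityTheory.cdf η).right_continuous x
    have htend : Filter.Tendsto (ProbabilityTheory.cdf η) (nhdsWithin x (Set.Ioi x))
        (nhds (ProbabilityTheory.cdf η x)) :=
      hrc.tendsto.mono_left (nhdsWithin_mono x Ioi_subset_Ici_self)
    exact ge_of_tendsto htend (Filter.eventually_of_mem self_mem_nhdsWithin fun y hy => key y hy)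
  · intro hle
    exact csInf_le ⟨-M, fun q hq => S_subset hM hp hq⟩ hle

lemma VaR_ge [IsProbabilityMeasure η] (hM : η {x | M < |x|} = 0) {p : ℝ}
    (hp : 0 < p) (hp1 : p ≤ 1) : -M ≤ VaR p η :=
  le_csInf ⟨M, mem_S_M hM hp1⟩ fun q hq => S_subset hM hp hq

lemma VaR_le [IsProbabilityMeasure η] (hM : η {x | M < |x|} = 0) {p : ℝ}
    (hp : 0 < p) (hp1 : p ≤ 1) : VaR p η ≤ M :=
  csInf_le ⟨-M, fun q hq => S_subset hM hp hq⟩ (mem_S_M hM hp1)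

/-- Monotone global version of the quantile function. -/
noncomputable def g (η : Measure ℝ) (M : ℝ) (p : ℝ) : ℝ :=
  if p ≤ 0 then -M else VaR (min p 1) η

lemma g_eq (p : ℝ) (hp : p ∈ Set.Ioc (0:ℝ) 1) : g η M p = VaR p η := by
  simp only [g, not_le.mpr hp.1, if_false, min_eq_left hp.2]

lemma g_mono [IsProbabilityMeasure η] (hM : η {x | M < |x|} = 0) : Monotone (g η M) := by
  intro p q hpq
  by_cases hp : p ≤ 0
  · by_cases hq : q ≤ 0
    · simp [g, hp, hq]
    · simp only [g, hp, if_true, hq, if_false]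
      push_neg at hq
      exact VaR_ge hM (by positivity) (min_le_right _ _)
  · have hq : ¬ q ≤ 0 := fun h => hp (hpq.trans h)
    simp only [g, hp, hq, if_false]
    push_neg at hp hq
    refine csInf_le_csInf ⟨-M, fun r hr => S_subset hM (by positivity) hr⟩
      ⟨M, mem_S_M hM (min_le_right _ _)⟩ ?_
    intro r hr
    simp only [mem_setOf_eq] at hr ⊢
    exact le_trans (min_le_min hpq le_rfl) hr

lemma g_abs_le [IsProbabilityMeasure η] (hM : η {x | M < |x|} = 0) (p : ℝ) :
    |g η M p| ≤ M := by
  have hM0 := M_nonneg hM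
  by_cases hp : p ≤ 0
  · simp [g, hp, abs_of_nonpos, hM0]
  · push_neg at hp
    simp only [g, not_le.mpr hp, if_false]
    rw [abs_le]
    exact ⟨VaR_ge hM (by positivity) (min_le_right _ _),
      VaR_le hM (by positivity) (min_le_right _ _)⟩

lemma g_measurable [IsProbabilityMeasure η] (hM : η {x | M < |x|} = 0) :
    Measurable (g η M) := (g_mono hM).measurable

instance : IsProbabilityMeasure (volume.restrict (Set.Ioo (0:ℝ) 1)) := by
  constructor
  rw [Measure.restrict_apply_univ, Real.volume_Ioo]
  norm_num

lemma map_g [IsProbabilityMeasure η] (hM : η {x | M < |x|} = 0) :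
    Measure.map (g η M) (volume.restrict (Set.Ioo (0:ℝ) 1)) = η := by
  haveI : IsProbabilityMeasure (Measure.map (g η M) (volume.restrict (Set.Ioo (0:ℝ) 1))) :=
    Measure.isProbabilityMeasure_map (g_measurable hM).aemeasurable
  refine Measure.ext_of_Iic _ _ (fun x => ?_)
  rw [Measure.map_apply (g_measurable hM) measurableSet_Iic,
    Measure.restrict_apply ((g_measurable hM) measurableSet_Iic)]
  set F := (η (Set.Iic x)).toReal with hF
  have hF0 : 0 ≤ F := ENNReal.toReal_nonneg
  have hF1 : F ≤ 1 := by
    rw [hF]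
    exact ENNReal.toReal_le_of_le_ofReal one_pos.le (by simpa using prob_le_one)
  have hset : g η M ⁻¹' Set.Iic x ∩ Set.Ioo 0 1 = Set.Iic F ∩ Set.Ioo 0 1 := by
    ext p
    simp only [mem_inter_iff, mem_preimage, mem_Iic, mem_Ioo, and_congr_left_iff]
    intro hp
    rw [g_eq p ⟨hp.1, hp.2.le⟩, VaR_le_iff hM hp.1 hp.2.le]
  rw [hset]
  have hη : η (Set.Iic x) = ENNReal.ofReal F := (ENNReal.ofReal_toReal (measure_ne_top η _)).symm
  rw [hη]
  rcases lt_or_ge F 1 with hlt | hge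
  · have : Set.Iic F ∩ Set.Ioo (0:ℝ) 1 = Set.Ioc 0 F := by
      ext p
      simp only [mem_inter_iff, mem_Iic, mem_Ioo, mem_Ioc]
      constructor
      · rintro ⟨h1, h2, h3⟩; exact ⟨h2, h1⟩
      · rintro ⟨h1, h2⟩; exact ⟨h2, h1, lt_of_le_of_lt h2 hlt⟩
    rw [this, Real.volume_Ioc, sub_zero]
  · have hF1' : F = 1 := le_antisymm hF1 hge
    have : Set.Iic F ∩ Set.Ioo (0:ℝ) 1 = Set.Ioo 0 1 := by
      ext p
      simp only [mem_inter_iff, mem_Iic, mem_Ioo]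
      exact ⟨fun h => h.2, fun h => ⟨by rw [hF1']; exact h.2.le, h⟩⟩
    rw [this, Real.volume_Ioo, hF1']
    norm_num

lemma integral_transfer [IsProbabilityMeasure η] (hM : η {x | M < |x|} = 0)
    {f : ℝ → ℝ} (hf : Measurable f) :
    ∫ x, f x ∂η = ∫ p in Set.Ioo (0:ℝ) 1, f (g η M p) := by
  conv_lhs => rw [← map_g hM]
  rw [integral_map (g_measurable hM).aemeasurable hf.aestronglyMeasurable]


lemma ae_abs_le [IsProbabilityMeasure η] (hM : η {x | M < |x|} = 0) :
    ∀ᵐ x ∂η, |x| ≤ M := by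
  rw [ae_iff]
  convert hM using 2
  ext x; simp

/-- integrability of bounded measurable functions on finite-measure sets -/
lemma intOn {f : ℝ → ℝ} (hf : Measurable f) {C : ℝ} (hC : ∀ p, |f p| ≤ C)
    {s : Set ℝ} (hs : volume s ≠ ⊤) : IntegrableOn f s := by
  haveI : IsFiniteMeasure (volume.restrict s) := by
    constructor; rwa [Measure.restrict_apply_univ, lt_top_iff_ne_top]
  exact Integrable.mono' (integrable_const C) hf.aestronglyMeasurable
    (Filter.Eventually.of_forall hC)

lemma int_posPart [IsProbabilityMeasure η] (hM : η {x | M < |x|} = 0) (q : ℝ) :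
    Integrable (fun x => max (x - q) 0) η := by
  refine Integrable.mono' (integrable_const (M + |q|))
    ((measurable_id.sub measurable_const).max measurable_const).aestronglyMeasurable ?_
  filter_upwards [ae_abs_le hM] with x hx
  have h1 : x - q ≤ M + |q| := by
    have := abs_le.mp hx
    have := neg_abs_le q
    linarith
  have h2 : (0:ℝ) ≤ M + |q| := add_nonneg (le_trans (abs_nonneg x) hx) (abs_nonneg q)
  rw [Real.norm_eq_abs, abs_of_nonneg (le_max_right _ _)]
  exact max_le h1 h2

lemma int_id [IsProbabilityMeasure η] (hM : η {x | M < |x|} = 0) :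
    Integrable (fun x : ℝ => x) η :=
  Integrable.mono' (integrable_const M) measurable_id.aestronglyMeasurable (ae_abs_le hM)

lemma D1 [IsProbabilityMeasure η] (hM : η {x | M < |x|} = 0) {s : ℝ} (q : ℝ)
    (hs0 : 0 ≤ s) (hs1 : s ≤ 1) :
    ∫ p in Set.Ioo s 1, g η M p ≤ (1 - s) * q + ∫ x, max (x - q) 0 ∂η := by
  have hIoo : volume (Set.Ioo s (1:ℝ)) ≠ ⊤ := by rw [Real.volume_Ioo]; exact ENNReal.ofReal_ne_top
  have hIoo01 : volume (Set.Ioo (0:ℝ) 1) ≠ ⊤ := by rw [Real.volume_Ioo]; exact ENNReal.ofReal_ne_top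
  have hgi : IntegrableOn (g η M) (Set.Ioo s 1) := intOn (g_measurable hM) (g_abs_le hM) hIoo
  have hmeas : Measurable (fun p => max (g η M p - q) 0) :=
    ((g_measurable hM).sub measurable_const).max measurable_const
  have habs : ∀ p, |max (g η M p - q) 0| ≤ M + |q| := by
    intro p
    rw [abs_of_nonneg (le_max_right _ _)]
    refine max_le ?_ (by have := M_nonneg hM; positivity)
    have := abs_le.mp (g_abs_le hM p)
    have := neg_abs_le q
    linarith
  have hpi : IntegrableOn (fun p => max (g η M p - q) 0) (Set.Ioo s 1) :=
    intOn hmeas habs hIoo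
  have hpi01 : IntegrableOn (fun p => max (g η M p - q) 0) (Set.Ioo (0:ℝ) 1) :=
    intOn hmeas habs hIoo01
  have step1 : ∫ p in Set.Ioo s 1, g η M p
      = (∫ p in Set.Ioo s 1, (g η M p - q)) + (1 - s) * q := by
    rw [integral_sub hgi (integrableOn_const hIoo)]
    rw [setIntegral_const, Real.volume_real_Ioo, max_eq_left (by linarith)]
    rw [smul_eq_mul]
    ring
  have step2 : ∫ p in Set.Ioo s 1, (g η M p - q) ≤ ∫ p in Set.Ioo s 1, max (g η M p - q) 0 := by
    refine setIntegral_mono (hgi.sub (integrableOn_const hIoo)) hpi ?_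
    intro p; exact le_max_left _ _
  have step3 : ∫ p in Set.Ioo s 1, max (g η M p - q) 0
      ≤ ∫ p in Set.Ioo (0:ℝ) 1, max (g η M p - q) 0 := by
    refine setIntegral_mono_set hpi01 ?_ ?_
    · exact Filter.Eventually.of_forall (fun p => le_max_right _ _)
    · exact HasSubset.Subset.eventuallyLE (Set.Ioo_subset_Ioo hs0 le_rfl)
  have step4 : ∫ p in Set.Ioo (0:ℝ) 1, max (g η M p - q) 0 = ∫ x, max (x - q) 0 ∂η :=
    (integral_transfer hM ((measurable_id.sub measurable_const).max measurable_const)).symm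
  linarith

lemma D2 [IsProbabilityMeasure η] (hM : η {x | M < |x|} = 0) {s : ℝ}
    (hs0 : 0 ≤ s) (hs1 : s < 1) :
    ∃ q, (1 - s) * q + ∫ x, max (x - q) 0 ∂η ≤ ∫ p in Set.Ioo s 1, g η M p := by
  have hIoo : ∀ a b : ℝ, volume (Set.Ioo a b) ≠ ⊤ := by
    intro a b; rw [Real.volume_Ioo]; exact ENNReal.ofReal_ne_top
  rcases eq_or_lt_of_le hs0 with hs | hs
  · -- s = 0 : take q = -M
    refine ⟨-M, le_of_eq ?_⟩
    have h1 : ∫ x, max (x - -M) 0 ∂η = ∫ x, (x + M) ∂η := by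
      refine integral_congr_ae ?_
      filter_upwards [ae_abs_le hM] with x hx
      have : -M ≤ x := (abs_le.mp hx).1
      rw [sub_neg_eq_add, max_eq_left (by linarith)]
    have h2 : ∫ x, (x + M) ∂η = (∫ x, x ∂η) + M := by
      rw [integral_add (int_id hM) (integrable_const M), integral_const, probReal_univ]
      simp
    have h3 : ∫ x, (x:ℝ) ∂η = ∫ p in Set.Ioo (0:ℝ) 1, g η M p :=
      integral_transfer hM measurable_id
    rw [h1, h2, h3, ← hs]
    ring
  · -- 0 < s < 1 : take q = g η M s
    set q := g η M s with hq
    refine ⟨q, le_of_eq ?_⟩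
    have hmeas : Measurable (fun x : ℝ => max (x - q) 0) :=
      (measurable_id.sub measurable_const).max measurable_const
    have h1 : ∫ x, max (x - q) 0 ∂η = ∫ p in Set.Ioo (0:ℝ) 1, max (g η M p - q) 0 :=
      integral_transfer hM hmeas
    have hmeasg : Measurable (fun p => max (g η M p - q) 0) :=
      ((g_measurable hM).sub measurable_const).max measurable_const
    have habs : ∀ p, |max (g η M p - q) 0| ≤ M + |q| := by
      intro p
      rw [abs_of_nonneg (le_max_right _ _)]
      refine max_le ?_ (by have := M_nonneg hM; positivity)
      have := abs_le.mp (g_abs_le hM p)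
      have := neg_abs_le q
      linarith
    have hsplit : Set.Ioo (0:ℝ) 1 = Set.Ioc 0 s ∪ Set.Ioo s 1 := by
      ext p
      simp only [mem_Ioo, mem_union, mem_Ioc]
      constructor
      · rintro ⟨h1, h2⟩
        rcases le_or_gt p s with h | h
        · exact Or.inl ⟨h1, h⟩
        · exact Or.inr ⟨h, h2⟩
      · rintro (⟨h1, h2⟩ | ⟨h1, h2⟩)
        · exact ⟨h1, lt_of_le_of_lt h2 hs1⟩
        · exact ⟨lt_trans hs h1, h2⟩
    have hdisj : Disjoint (Set.Ioc (0:ℝ) s) (Set.Ioo s 1) := by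
      rw [Set.disjoint_left]
      rintro p ⟨_, h1⟩ ⟨h2, _⟩
      exact absurd h1 (not_le.mpr h2)
    have h2 : ∫ p in Set.Ioo (0:ℝ) 1, max (g η M p - q) 0
        = (∫ p in Set.Ioc (0:ℝ) s, max (g η M p - q) 0)
          + ∫ p in Set.Ioo s 1, max (g η M p - q) 0 := by
      rw [hsplit]
      exact setIntegral_union hdisj measurableSet_Ioo
        (intOn hmeasg habs (by rw [Real.volume_Ioc]; exact ENNReal.ofReal_ne_top))
        (intOn hmeasg habs (hIoo s 1))
    have h3 : ∫ p in Set.Ioc (0:ℝ) s, max (g η M p - q) 0 = 0 := by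
      rw [setIntegral_congr_fun measurableSet_Ioc (g := fun _ => (0:ℝ))]
      · simp
      · intro p hp
        have : g η M p ≤ q := g_mono hM hp.2
        simp only
        rw [max_eq_right (by linarith)]
    have h4 : ∫ p in Set.Ioo s 1, max (g η M p - q) 0
        = (∫ p in Set.Ioo s 1, g η M p) - (1 - s) * q := by
      rw [setIntegral_congr_fun measurableSet_Ioo (g := fun p => g η M p - q)]
      · rw [integral_sub (intOn (g_measurable hM) (g_abs_le hM) (hIoo s 1))
          (integrableOn_const (hIoo s 1))]
        rw [setIntegral_const, Real.volume_real_Ioo, max_eq_left (by linarith), smul_eq_mul]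
      · intro p hp
        have : q ≤ g η M p := g_mono hM hp.1.le
        simp only
        rw [max_eq_left (by linarith)]
    rw [h1, h2, h3, h4]
    ring


variable {Ω : Type*} [MeasurableSpace Ω] {P : Measure Ω} [IsProbabilityMeasure P]

lemma map_null {X : Ω → ℝ} (hX : Measurable X) (hXb : ∀ ω, |X ω| ≤ M) :
    (P.map X) {x | M < |x|} = 0 := by
  have hms : MeasurableSet {x : ℝ | M < |x|} :=
    measurableSet_lt measurable_const measurable_abs
  rw [Measure.map_apply hX hms]
  have hpre : X ⁻¹' {x | M < |x|} = ∅ := by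
    ext ω
    simp only [mem_preimage, mem_setOf_eq, mem_empty_iff_false, iff_false, not_lt]
    exact hXb ω
  rw [hpre]
  exact measure_empty

lemma int_posPart_P (hM0 : 0 ≤ M) {W : Ω → ℝ} (hW : Measurable W)
    (hWb : ∀ ω, |W ω| ≤ M) (q : ℝ) :
    Integrable (fun ω => max (W ω - q) 0) P := by
  refine Integrable.mono' (integrable_const (M + |q|))
    ((hW.sub measurable_const).max measurable_const).aestronglyMeasurable ?_
  refine Filter.Eventually.of_forall fun ω => ?_
  rw [Real.norm_eq_abs, abs_of_nonneg (le_max_right _ _)]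
  have h1 := abs_le.mp (hWb ω)
  have h2 := neg_abs_le q
  refine max_le (by linarith [h1.2]) (by positivity)

lemma key (hM0 : 0 ≤ M) {X Y : Ω → ℝ} (hX : Measurable X) (hY : Measurable Y)
    (hXb : ∀ ω, |X ω| ≤ M) (hYb : ∀ ω, |Y ω| ≤ M)
    {t : ℝ} (ht0 : 0 ≤ t) (ht1 : t ≤ 1) {s : ℝ} (hs0 : 0 ≤ s) (hs1 : s ≤ 1) :
    ∫ p in Set.Ioo s 1, g (P.map fun ω => t * X ω + (1 - t) * Y ω) M p
      ≤ t * (∫ p in Set.Ioo s 1, g (P.map X) M p)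
        + (1 - t) * ∫ p in Set.Ioo s 1, g (P.map Y) M p := by
  set Z : Ω → ℝ := fun ω => t * X ω + (1 - t) * Y ω with hZdef
  have hZ : Measurable Z := (hX.const_mul t).add (hY.const_mul (1 - t))
  have hZb : ∀ ω, |Z ω| ≤ M := by
    intro ω
    calc |Z ω| ≤ t * |X ω| + (1 - t) * |Y ω| := by
          refine (abs_add_le _ _).trans ?_
          rw [abs_mul, abs_mul, abs_of_nonneg ht0, abs_of_nonneg (by linarith : (0:ℝ) ≤ 1 - t)]
      _ ≤ t * M + (1 - t) * M := by
          refine add_le_add (mul_le_mul_of_nonneg_left (hXb ω) ht0)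
            (mul_le_mul_of_nonneg_left (hYb ω) (by linarith))
      _ = M := by ring
  haveI hPX : IsProbabilityMeasure (P.map X) := Measure.isProbabilityMeasure_map (hX.aemeasurable (μ := P))
  haveI hPY : IsProbabilityMeasure (P.map Y) := Measure.isProbabilityMeasure_map (hY.aemeasurable (μ := P))
  haveI hPZ : IsProbabilityMeasure (P.map Z) := Measure.isProbabilityMeasure_map (hZ.aemeasurable (μ := P))
  have hMX := map_null (P := P) hX hXb
  have hMY := map_null (P := P) hY hYb
  have hMZ := map_null (P := P) hZ hZb
  rcases eq_or_lt_of_le hs1 with hs | hs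
  · subst hs
    simp
  obtain ⟨qX, hqX⟩ := D2 hMX hs0 hs
  obtain ⟨qY, hqY⟩ := D2 hMY hs0 hs
  set q := t * qX + (1 - t) * qY with hqdef
  have step1 := D1 hMZ q hs0 hs1
  have hmax : ∀ x, Measurable fun y : ℝ => max (y - x) 0 :=
    fun x => (measurable_id.sub measurable_const).max measurable_const
  have step2 : ∫ x, max (x - q) 0 ∂(P.map Z) = ∫ ω, max (Z ω - q) 0 ∂P :=
    integral_map hZ.aemeasurable (hmax q).aestronglyMeasurable
  have step3 : ∫ ω, max (Z ω - q) 0 ∂P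
      ≤ ∫ ω, (t * max (X ω - qX) 0 + (1 - t) * max (Y ω - qY) 0) ∂P := by
    refine integral_mono (int_posPart_P hM0 hZ hZb q) ?_ ?_
    · exact ((int_posPart_P hM0 hX hXb qX).const_mul t).add
        ((int_posPart_P hM0 hY hYb qY).const_mul (1 - t))
    · intro ω
      simp only
      have hZq : Z ω - q = t * (X ω - qX) + (1 - t) * (Y ω - qY) := by
        rw [hZdef, hqdef]; ring
      rw [hZq]
      refine max_le ?_ ?_
      · refine add_le_add (mul_le_mul_of_nonneg_left (le_max_left _ _) ht0)
          (mul_le_mul_of_nonneg_left (le_max_left _ _) (by linarith))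
      · have : (0:ℝ) ≤ t * max (X ω - qX) 0 := mul_nonneg ht0 (le_max_right _ _)
        have : (0:ℝ) ≤ (1 - t) * max (Y ω - qY) 0 :=
          mul_nonneg (by linarith) (le_max_right _ _)
        positivity
  have step4 : ∫ ω, (t * max (X ω - qX) 0 + (1 - t) * max (Y ω - qY) 0) ∂P
      = t * (∫ x, max (x - qX) 0 ∂(P.map X)) + (1 - t) * ∫ x, max (x - qY) 0 ∂(P.map Y) := by
    rw [integral_add ((int_posPart_P hM0 hX hXb qX).const_mul t)
      ((int_posPart_P hM0 hY hYb qY).const_mul (1 - t)),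
      integral_const_mul, integral_const_mul,
      integral_map hX.aemeasurable (hmax qX).aestronglyMeasurable,
      integral_map hY.aemeasurable (hmax qY).aestronglyMeasurable]
  have hq1 : (1 - s) * q = t * ((1 - s) * qX) + (1 - t) * ((1 - s) * qY) := by
    rw [hqdef]; ring
  calc ∫ p in Set.Ioo s 1, g (P.map Z) M p
      ≤ (1 - s) * q + ∫ x, max (x - q) 0 ∂(P.map Z) := step1
    _ ≤ (1 - s) * q + (t * (∫ x, max (x - qX) 0 ∂(P.map X))
          + (1 - t) * ∫ x, max (x - qY) 0 ∂(P.map Y)) := by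
        rw [step2, ← step4]; linarith [step3]
    _ = t * ((1 - s) * qX + ∫ x, max (x - qX) 0 ∂(P.map X))
          + (1 - t) * ((1 - s) * qY + ∫ x, max (x - qY) 0 ∂(P.map Y)) := by
        rw [hq1]; ring
    _ ≤ t * (∫ p in Set.Ioo s 1, g (P.map X) M p)
          + (1 - t) * ∫ p in Set.Ioo s 1, g (P.map Y) M p := by
        refine add_le_add (mul_le_mul_of_nonneg_left hqX ht0)
          (mul_le_mul_of_nonneg_left hqY (sub_nonneg.mpr ht1))


lemma fubini_bound (D : ℝ → ℝ) (hD : Measurable D) (C : ℝ) (hC : ∀ p, |D p| ≤ C)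
    (h' : ℝ → ℝ) (hm : Monotone h') (hnn : ∀ p, 0 ≤ h' p) (B : ℝ) (hB : ∀ p, h' p ≤ B)
    (hint : ∀ s : ℝ, 0 ≤ s → s ≤ 1 → ∫ p in Set.Ioo s 1, D p ≤ 0) :
    ∫ p in Set.Ioo (0:ℝ) 1, D p * h' p ≤ 0 := by
  set K : ℝ → ℝ → ℝ := fun p y => if y < h' p then D p else 0 with hK
  have hC0 : 0 ≤ C := le_trans (abs_nonneg _) (hC 0)
  haveI hfin : ∀ a b : ℝ, IsFiniteMeasure (volume.restrict (Set.Ioo a b)) := by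
    intro a b
    constructor
    rw [Measure.restrict_apply_univ, Real.volume_Ioo]
    exact ENNReal.ofReal_lt_top
  haveI := hfin 0 1
  haveI := hfin 0 B
  have hKuncurry : Function.uncurry K
      = ({q : ℝ × ℝ | q.2 < h' q.1}).indicator (fun q => D q.1) := by
    funext q
    rcases q with ⟨p, y⟩
    by_cases hpy : y < h' p
    · simp [Function.uncurry, hK, hpy, Set.indicator_of_mem, mem_setOf_eq]
    · simp [Function.uncurry, hK, hpy, Set.indicator_of_notMem, mem_setOf_eq]
  have hA : MeasurableSet {q : ℝ × ℝ | q.2 < h' q.1} :=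
    measurableSet_lt measurable_snd (hm.measurable.comp measurable_fst)
  have hKmeas : Measurable (Function.uncurry K) := by
    rw [hKuncurry]
    exact (hD.comp measurable_fst).indicator hA
  have hKbd : ∀ q : ℝ × ℝ, ‖Function.uncurry K q‖ ≤ C := by
    intro ⟨p, y⟩
    simp only [Function.uncurry, hK, Real.norm_eq_abs]
    split
    · exact hC p
    · simpa using hC0
  have hKint : Integrable (Function.uncurry K)
      ((volume.restrict (Set.Ioo (0:ℝ) 1)).prod (volume.restrict (Set.Ioo (0:ℝ) B))) :=
    Integrable.mono' (integrable_const C) hKmeas.aestronglyMeasurable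
      (Filter.Eventually.of_forall hKbd)
  have step1 : ∀ p, ∫ y in Set.Ioo (0:ℝ) B, K p y = D p * h' p := by
    intro p
    have hfun : (fun y => K p y) = (Set.Iio (h' p)).indicator (fun _ => D p) := by
      funext y
      by_cases hpy : y < h' p
      · simp [hK, hpy, Set.indicator_of_mem, mem_Iio]
      · simp [hK, hpy, Set.indicator_of_notMem, mem_Iio]
    rw [hfun, setIntegral_indicator measurableSet_Iio]
    have hset : Set.Ioo (0:ℝ) B ∩ Set.Iio (h' p) = Set.Ioo 0 (h' p) := by
      ext y
      simp only [mem_inter_iff, mem_Ioo, mem_Iio]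
      exact ⟨fun hh => ⟨hh.1.1, hh.2⟩, fun hh => ⟨⟨hh.1, lt_of_lt_of_le hh.2 (hB p)⟩, hh.2⟩⟩
    rw [hset, setIntegral_const, Real.volume_real_Ioo, sub_zero,
      max_eq_left (hnn p), smul_eq_mul, mul_comm]
  have step4 : ∀ y : ℝ, ∫ p in Set.Ioo (0:ℝ) 1, K p y ≤ 0 := by
    intro y
    set S : Set ℝ := {p | y < h' p} with hS
    have hSmeas : MeasurableSet S := measurableSet_lt measurable_const hm.measurable
    have hfun : (fun p => K p y) = S.indicator D := by
      funext p
      by_cases hpy : y < h' p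
      · simp [hK, hS, hpy, Set.indicator_of_mem, mem_setOf_eq]
      · simp [hK, hS, hpy, Set.indicator_of_notMem, mem_setOf_eq]
    rw [hfun, setIntegral_indicator hSmeas]
    rcases Set.eq_empty_or_nonempty (Set.Ioo (0:ℝ) 1 ∩ S) with hemp | ⟨p0, hp0⟩
    · rw [hemp]
      simp
    · set sy := sInf (S ∩ Set.Ici 0) with hsy
      have hne : (S ∩ Set.Ici 0).Nonempty := ⟨p0, hp0.2, hp0.1.1.le⟩
      have hbdd : BddBelow (S ∩ Set.Ici 0) := ⟨0, fun r hr => hr.2⟩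
      have hsy0 : 0 ≤ sy := le_csInf hne fun r hr => hr.2
      have hsy1 : sy ≤ 1 := le_trans (csInf_le hbdd ⟨hp0.2, hp0.1.1.le⟩) hp0.1.2.le
      have hsub1 : Set.Ioo sy 1 ⊆ Set.Ioo (0:ℝ) 1 ∩ S := by
        intro p hp
        obtain ⟨r, hr, hrp⟩ := exists_lt_of_csInf_lt hne hp.1
        exact ⟨⟨lt_of_le_of_lt hsy0 hp.1, hp.2⟩, lt_of_lt_of_le hr.1 (hm hrp.le)⟩
      have hsub2 : Set.Ioo (0:ℝ) 1 ∩ S ⊆ Set.Ico sy 1 := by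
        intro p hp
        exact ⟨csInf_le hbdd ⟨hp.2, hp.1.1.le⟩, hp.1.2⟩
      have haeq : (Set.Ioo (0:ℝ) 1 ∩ S : Set ℝ) =ᵐ[volume] Set.Ioo sy 1 := by
        rw [MeasureTheory.ae_eq_set]
        constructor
        · refine measure_mono_null (fun p hp => ?_) (measure_singleton sy)
          rcases hp with ⟨hpA, hpB⟩
          have h2 := hsub2 hpA
          simp only [mem_Ioo, not_and_or, not_lt] at hpB
          rcases hpB with hple | h1le
          · exact le_antisymm hple h2.1 ▸ rfl
          · exact absurd h2.2 (not_lt.mpr h1le)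
        · have : Set.Ioo sy 1 \ (Set.Ioo (0:ℝ) 1 ∩ S) = ∅ := by
            rw [Set.diff_eq_empty]
            exact hsub1
          rw [this]
          exact measure_empty
      rw [setIntegral_congr_set haeq]
      exact hint sy hsy0 hsy1
  calc ∫ p in Set.Ioo (0:ℝ) 1, D p * h' p
      = ∫ p in Set.Ioo (0:ℝ) 1, ∫ y in Set.Ioo (0:ℝ) B, K p y := by
        refine integral_congr_ae (Filter.Eventually.of_forall fun p => ?_)
        exact (step1 p).symm
    _ = ∫ y in Set.Ioo (0:ℝ) B, ∫ p in Set.Ioo (0:ℝ) 1, K p y := by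
        exact integral_integral_swap hKint
    _ ≤ 0 := integral_nonpos_of_ae (Filter.Eventually.of_forall step4)


end SRM

/-- Convexity of spectral risk measures. -/
theorem stmt_19 (h : ℝ → ℝ) (hpos : ∀ p ∈ Set.Icc (0 : ℝ) 1, 0 ≤ h p)
    (hmono : MonotoneOn h (Set.Icc (0 : ℝ) 1))
    (hdens : ∫ p in (0 : ℝ)..1, h p = 1)
    {Ω : Type*} [MeasurableSpace Ω] (P : Measure Ω) [IsProbabilityMeasure P]
    (X Y : Ω → ℝ) (hX : Measurable X) (hY : Measurable Y)
    (hXbdd : ∃ M : ℝ, ∀ ω, |X ω| ≤ M) (hYbdd : ∃ M : ℝ, ∀ ω, |Y ω| ≤ M)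
    (t : ℝ) (ht : t ∈ Set.Icc (0 : ℝ) 1) :
    spectralRisk h (P.map (fun ω => t * X ω + (1 - t) * Y ω))
      ≤ t * spectralRisk h (P.map X) + (1 - t) * spectralRisk h (P.map Y) := by
  classical
  open SRM in
  obtain ⟨MX, hMXb⟩ := hXbdd
  obtain ⟨MY, hMYb⟩ := hYbdd
  obtain ⟨ht0, ht1⟩ := ht
  set M : ℝ := max (max MX MY) 0 with hMdef
  have hM0 : 0 ≤ M := le_max_right _ _
  have hXb : ∀ ω, |X ω| ≤ M := fun ω =>
    (hMXb ω).trans (le_max_of_le_left (le_max_left _ _))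
  have hYb : ∀ ω, |Y ω| ≤ M := fun ω =>
    (hMYb ω).trans (le_max_of_le_left (le_max_right _ _))
  set Z : Ω → ℝ := fun ω => t * X ω + (1 - t) * Y ω with hZdef
  have hZ : Measurable Z := (hX.const_mul t).add (hY.const_mul (1 - t))
  have hZb : ∀ ω, |Z ω| ≤ M := by
    intro ω
    calc |Z ω| ≤ t * |X ω| + (1 - t) * |Y ω| := by
          refine (abs_add_le _ _).trans ?_
          rw [abs_mul, abs_mul, abs_of_nonneg ht0, abs_of_nonneg (by linarith : (0:ℝ) ≤ 1 - t)]
      _ ≤ t * M + (1 - t) * M := add_le_add (mul_le_mul_of_nonneg_left (hXb ω) ht0)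
          (mul_le_mul_of_nonneg_left (hYb ω) (by linarith))
      _ = M := by ring
  haveI hPX : IsProbabilityMeasure (P.map X) := Measure.isProbabilityMeasure_map (hX.aemeasurable (μ := P))
  haveI hPY : IsProbabilityMeasure (P.map Y) := Measure.isProbabilityMeasure_map (hY.aemeasurable (μ := P))
  haveI hPZ : IsProbabilityMeasure (P.map Z) := Measure.isProbabilityMeasure_map (hZ.aemeasurable (μ := P))
  have hMX : (P.map X) {x | M < |x|} = 0 := map_null (P := P) hX hXb
  have hMY : (P.map Y) {x | M < |x|} = 0 := map_null (P := P) hY hYb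
  have hMZ : (P.map Z) {x | M < |x|} = 0 := map_null (P := P) hZ hZb
  -- the clamped version of h
  set h' : ℝ → ℝ := fun p => h (min 1 (max 0 p)) with hh'
  have hcl : ∀ p : ℝ, min 1 (max 0 p) ∈ Set.Icc (0:ℝ) 1 := fun p =>
    ⟨le_min zero_le_one (le_max_left 0 p), min_le_left _ _⟩
  have h'mono : Monotone h' := fun p q hpq =>
    hmono (hcl p) (hcl q) (min_le_min le_rfl (max_le_max le_rfl hpq))
  have h'nonneg : ∀ p, 0 ≤ h' p := fun p => hpos _ (hcl p)
  set B : ℝ := h 1 with hBdef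
  have hB0 : 0 ≤ B := hpos 1 ⟨zero_le_one, le_rfl⟩
  have h'le : ∀ p, h' p ≤ B := fun p =>
    hmono (hcl p) ⟨zero_le_one, le_rfl⟩ (min_le_left _ _)
  have h'eq : ∀ p ∈ Set.Icc (0:ℝ) 1, h' p = h p := by
    intro p hp
    simp only [hh']
    rw [max_eq_right hp.1, min_eq_right hp.2]
  -- rewrite the spectral risks as set integrals of g * h'
  have hrisk : ∀ (W : Ω → ℝ), Measurable W → (∀ ω, |W ω| ≤ M) →
      spectralRisk h (P.map W) = ∫ p in Set.Ioo (0:ℝ) 1, g (P.map W) M p * h' p := by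
    intro W hW hWb
    haveI : IsProbabilityMeasure (P.map W) := Measure.isProbabilityMeasure_map (hW.aemeasurable (μ := P))
    have hMW : (P.map W) {x | M < |x|} = 0 := map_null (P := P) hW hWb
    rw [spectralRisk, intervalIntegral.integral_of_le zero_le_one,
      ← setIntegral_congr_set (Ioo_ae_eq_Ioc (a := (0:ℝ)) (b := (1:ℝ)))]
    refine setIntegral_congr_fun measurableSet_Ioo fun p hp => ?_
    rw [g_eq p ⟨hp.1, hp.2.le⟩, h'eq p ⟨hp.1.le, hp.2.le⟩]
  rw [hrisk X hX hXb, hrisk Y hY hYb]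
  have hZrw : spectralRisk h (P.map fun ω => t * X ω + (1 - t) * Y ω)
      = ∫ p in Set.Ioo (0:ℝ) 1, g (P.map Z) M p * h' p := hrisk Z hZ hZb
  rw [hZrw]
  -- the difference function
  set Df : ℝ → ℝ := fun p =>
    g (P.map Z) M p - t * g (P.map X) M p - (1 - t) * g (P.map Y) M p with hDf
  have hDmeas : Measurable Df :=
    ((g_measurable hMZ).sub ((g_measurable hMX).const_mul t)).sub
      ((g_measurable hMY).const_mul (1 - t))
  have hDbd : ∀ p, |Df p| ≤ 2 * M := by
    intro p
    have h1 := abs_le.mp (g_abs_le hMZ p)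
    have h2 := abs_le.mp (g_abs_le hMX p)
    have h3 := abs_le.mp (g_abs_le hMY p)
    simp only [hDf]
    have h4 : t * g (P.map X) M p ≤ t * M := mul_le_mul_of_nonneg_left h2.2 ht0
    have h5 : t * (-M) ≤ t * g (P.map X) M p := mul_le_mul_of_nonneg_left h2.1 ht0
    have h6 : (1 - t) * g (P.map Y) M p ≤ (1 - t) * M :=
      mul_le_mul_of_nonneg_left h3.2 (by linarith)
    have h7 : (1 - t) * (-M) ≤ (1 - t) * g (P.map Y) M p :=
      mul_le_mul_of_nonneg_left h3.1 (by linarith)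
    rw [abs_le]
    constructor <;> [nlinarith; nlinarith]
  have hIoofin : ∀ a b : ℝ, volume (Set.Ioo a b) ≠ ⊤ := by
    intro a b; rw [Real.volume_Ioo]; exact ENNReal.ofReal_ne_top
  have hint : ∀ s : ℝ, 0 ≤ s → s ≤ 1 → ∫ p in Set.Ioo s 1, Df p ≤ 0 := by
    intro s hs0 hs1
    have hiX : IntegrableOn (fun p => t * g (P.map X) M p) (Set.Ioo s 1) :=
      (intOn (g_measurable hMX) (g_abs_le hMX) (hIoofin s 1)).const_mul t
    have hiY : IntegrableOn (fun p => (1 - t) * g (P.map Y) M p) (Set.Ioo s 1) :=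
      (intOn (g_measurable hMY) (g_abs_le hMY) (hIoofin s 1)).const_mul (1 - t)
    have hiZ : IntegrableOn (g (P.map Z) M) (Set.Ioo s 1) :=
      intOn (g_measurable hMZ) (g_abs_le hMZ) (hIoofin s 1)
    have hsplit : ∫ p in Set.Ioo s 1, Df p
        = (∫ p in Set.Ioo s 1, g (P.map Z) M p)
          - t * (∫ p in Set.Ioo s 1, g (P.map X) M p)
          - (1 - t) * ∫ p in Set.Ioo s 1, g (P.map Y) M p := by
      simp only [hDf]
      have hiZX : IntegrableOn
          (fun p => g (P.map Z) M p - t * g (P.map X) M p) (Set.Ioo s 1) := hiZ.sub hiX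
      rw [integral_sub hiZX hiY, integral_sub hiZ hiX,
        integral_const_mul, integral_const_mul]
    rw [hsplit]
    have := key (P := P) hM0 hX hY hXb hYb ht0 ht1 hs0 hs1
    linarith
  have hfub : ∫ p in Set.Ioo (0:ℝ) 1, Df p * h' p ≤ 0 :=
    fubini_bound Df hDmeas (2 * M) hDbd h' h'mono h'nonneg B h'le hint
  -- expand the product integral
  have hprod : ∀ (η : Measure ℝ), IsProbabilityMeasure η → η {x | M < |x|} = 0 →
      IntegrableOn (fun p => g η M p * h' p) (Set.Ioo (0:ℝ) 1) := by
    intro η hη hMη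
    haveI := hη
    refine intOn ((g_measurable hMη).mul h'mono.measurable) (C := M * B) (fun p => ?_)
      (hIoofin 0 1)
    show |g η M p * h' p| ≤ M * B
    rw [abs_mul, abs_of_nonneg (h'nonneg p)]
    exact mul_le_mul (g_abs_le hMη p) (h'le p) (h'nonneg p) hM0
  have hexp : ∫ p in Set.Ioo (0:ℝ) 1, Df p * h' p
      = (∫ p in Set.Ioo (0:ℝ) 1, g (P.map Z) M p * h' p)
        - t * (∫ p in Set.Ioo (0:ℝ) 1, g (P.map X) M p * h' p)
        - (1 - t) * ∫ p in Set.Ioo (0:ℝ) 1, g (P.map Y) M p * h' p := by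
    have e1 : ∀ p, Df p * h' p
        = g (P.map Z) M p * h' p - t * (g (P.map X) M p * h' p)
          - (1 - t) * (g (P.map Y) M p * h' p) := by
      intro p; simp only [hDf]; ring
    rw [setIntegral_congr_fun measurableSet_Ioo (fun p _ => e1 p)]
    have hiZX : IntegrableOn
        (fun p => g (P.map Z) M p * h' p - t * (g (P.map X) M p * h' p))
        (Set.Ioo (0:ℝ) 1) := (hprod _ hPZ hMZ).sub ((hprod _ hPX hMX).const_mul t)
    rw [integral_sub hiZX ((hprod _ hPY hMY).const_mul (1 - t)),
      integral_sub (hprod _ hPZ hMZ) ((hprod _ hPX hMX).const_mul t),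
      integral_const_mul, integral_const_mul]
  rw [hexp] at hfub
  linarith
end
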